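/- arXiv:2201.10117 — 2 statements merged into one kernel-verified Lean document; each statement's English description precedes it below -/
import Mathlib

section
/- For 0<q<1 and all complex x, E_q(x)·E_q(-x) = ∑_{n≥0} q^{n(n-1)/2} G_n(-1) x^n/[n]_q!, where G_n(x) = ∑_{k=0}^n [n choose k]_q q^{k²-nk} x^k. -/
open Finset Filter

/-- The q-shifted factorial `(a;q)_n = ∏_{k=0}^{n-1} (1 - a q^k)`. -/
noncomputable def qPoch (a q : ℂ) (n : ℕ) : ℂ := ∏ k ∈ Finset.range n, (1 - a * q ^ k)

/-- The q-factorial `[n]_q! = (q;q)_n / (1-q)^n`. -/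
noncomputable def qFact (q : ℂ) (n : ℕ) : ℂ := qPoch q q n / (1 - q) ^ n

/-- The Gaussian binomial coefficient. -/
noncomputable def qBinom (q : ℂ) (n k : ℕ) : ℂ :=
  qPoch q q n / (qPoch q q k * qPoch q q (n - k))

/-- The q-exponential `E_q(x)`. -/
noncomputable def qExpE (q x : ℂ) : ℂ :=
  ∑' n : ℕ, q ^ (n * (n - 1) / 2) * (1 - q) ^ n * x ^ n / qPoch q q n

/-- Al-Salam's polynomial `G_n(x) = ∑_{k=0}^n [n,k]_q q^{k²-nk} x^k`. -/
noncomputable def alSalamG (q x : ℂ) (n : ℕ) : ℂ :=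
  ∑ k ∈ Finset.range (n + 1), qBinom q n k * q ^ (k ^ 2) * (q ^ (n * k))⁻¹ * x ^ k

lemma expAux (m k : ℕ) :
    m * (m - 1) / 2 + k * (k - 1) / 2 + (m + k) * k = (m + k) * ((m + k) - 1) / 2 + k ^ 2 := by
  rw [← Nat.choose_two_right m, ← Nat.choose_two_right k, ← Nat.choose_two_right (m + k),
    Nat.add_choose_eq, Finset.Nat.sum_antidiagonal_eq_sum_range_succ_mk]
  simp [Finset.sum_range_succ, Nat.choose_one_right]
  ring

section facts
variable {q : ℝ} (hq : 0 < q) (hq1 : q < 1)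

include hq hq1 in
lemma factor_ne (k : ℕ) : (1 : ℂ) - (q : ℂ) * (q : ℂ) ^ k ≠ 0 := by
  intro h
  have h2 : (q : ℂ) * (q : ℂ) ^ k = 1 := by linear_combination -h
  have : ((q * q ^ k : ℝ) : ℂ) = 1 := by push_cast; exact h2
  have h3 : q * q ^ k = 1 := by exact_mod_cast this
  have : q * q ^ k < 1 := by
    calc q * q ^ k ≤ q * 1 := by
          apply mul_le_mul_of_nonneg_left (pow_le_one₀ hq.le hq1.le) hq.le
      _ < 1 := by linarith
  linarith

include hq hq1 in
lemma poch_ne (n : ℕ) : qPoch (q : ℂ) (q : ℂ) n ≠ 0 :=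
  Finset.prod_ne_zero_iff.2 fun k _ => factor_ne hq hq1 k

include hq hq1 in
lemma one_sub_ne : (1 : ℂ) - (q : ℂ) ≠ 0 := by
  simpa using factor_ne hq hq1 0

include hq hq1 in
lemma summable_norm_qexp (y : ℂ) :
    Summable (fun n : ℕ =>
      ‖(q : ℂ) ^ (n * (n - 1) / 2) * (1 - (q : ℂ)) ^ n * y ^ n / qPoch (q : ℂ) (q : ℂ) n‖) := by
  set Q : ℂ := (q : ℂ)
  set t : ℕ → ℂ := fun n => Q ^ (n * (n - 1) / 2) * (1 - Q) ^ n * y ^ n / qPoch Q Q n with ht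
  set C : ℝ := ‖1 - Q‖ * ‖y‖ / (1 - q) with hC
  apply summable_of_ratio_norm_eventually_le (r := 1/2) (by norm_num)
  have hlim : Tendsto (fun n : ℕ => C * q ^ n) atTop (nhds 0) := by
    simpa using (tendsto_pow_atTop_nhds_zero_of_lt_one hq.le hq1).const_mul C
  filter_upwards [hlim.eventually (gt_mem_nhds (show (0:ℝ) < 1/2 by norm_num))] with n hn
  have hrec : t (n + 1) = (Q ^ n * (1 - Q) * y / (1 - Q * Q ^ n)) * t n := by
    simp only [ht]
    rw [Nat.triangle_succ, pow_add, qPoch, Finset.prod_range_succ, ← qPoch]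
    field_simp [poch_ne hq hq1, factor_ne hq hq1]
    ring
  have hden : (1 : ℝ) - q ≤ ‖1 - Q * Q ^ n‖ := by
    have h1 : ‖Q * Q ^ n‖ ≤ q := by
      rw [norm_mul, norm_pow]
      have hQ : ‖Q‖ = q := by simp [Q, abs_of_pos hq]
      rw [hQ]
      calc q * q ^ n ≤ q * 1 := by
            apply mul_le_mul_of_nonneg_left (pow_le_one₀ hq.le hq1.le) hq.le
        _ = q := mul_one q
    calc (1:ℝ) - q ≤ 1 - ‖Q * Q ^ n‖ := by linarith
      _ = ‖(1:ℂ)‖ - ‖Q * Q ^ n‖ := by simp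
      _ ≤ ‖1 - Q * Q ^ n‖ := norm_sub_norm_le _ _
  have hQn : ‖Q ^ n‖ = q ^ n := by
    rw [norm_pow]; congr 1; simp [Q, abs_of_pos hq]
  have hratio : ‖Q ^ n * (1 - Q) * y / (1 - Q * Q ^ n)‖ ≤ C * q ^ n := by
    rw [norm_div, norm_mul, norm_mul, hQn]
    have hnum : (0:ℝ) ≤ q ^ n * ‖1 - Q‖ * ‖y‖ := by positivity
    calc q ^ n * ‖1 - Q‖ * ‖y‖ / ‖1 - Q * Q ^ n‖
        ≤ q ^ n * ‖1 - Q‖ * ‖y‖ / (1 - q) :=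
          div_le_div_of_nonneg_left hnum (by linarith) hden
      _ = C * q ^ n := by rw [hC]; ring
  have htn : (0:ℝ) ≤ ‖t n‖ := norm_nonneg _
  calc ‖‖t (n+1)‖‖ = ‖t (n+1)‖ := by rw [Real.norm_of_nonneg (norm_nonneg _)]
    _ = ‖Q ^ n * (1 - Q) * y / (1 - Q * Q ^ n)‖ * ‖t n‖ := by rw [hrec, norm_mul]
    _ ≤ (C * q ^ n) * ‖t n‖ := mul_le_mul_of_nonneg_right hratio htn
    _ ≤ (1/2) * ‖t n‖ := mul_le_mul_of_nonneg_right hn.le htn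
    _ = (1/2) * ‖‖t n‖‖ := by rw [Real.norm_of_nonneg (norm_nonneg _)]

end facts

/-- `E_q(x) E_q(-x) = ∑ q^{n(n-1)/2} G_n(-1) x^n/[n]_q!` for all complex `x`. -/
theorem stmt3 (q : ℝ) (hq : 0 < q) (hq1 : q < 1) (x : ℂ) :
    qExpE (q : ℂ) x * qExpE (q : ℂ) (-x) =
      ∑' n : ℕ, ((q : ℂ)) ^ (n * (n - 1) / 2) * alSalamG (q : ℂ) (-1) n * x ^ n /
        qFact (q : ℂ) n := by
  set Q : ℂ := (q : ℂ)
  have hQ : Q ≠ 0 := by simp [Q, hq.ne']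
  rw [qExpE, qExpE,
    tsum_mul_tsum_eq_tsum_sum_antidiagonal_of_summable_norm
      (summable_norm_qexp hq hq1 x) (summable_norm_qexp hq hq1 (-x))]
  apply tsum_congr
  intro n
  rw [Finset.Nat.sum_antidiagonal_eq_sum_range_succ_mk, ← Finset.sum_range_reflect,
    alSalamG, qFact, Finset.mul_sum, Finset.sum_mul, Finset.sum_div]
  apply Finset.sum_congr rfl
  intro k hk
  have hk' : k ≤ n := Nat.lt_succ_iff.mp (Finset.mem_range.mp hk)
  obtain ⟨m, rfl⟩ := Nat.exists_eq_add_of_le hk'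
  have h1 : k + m - k = m := by omega
  have h3 : k + m - m = k := by omega
  simp only [Nat.succ_sub_one, h1, h3]
  rw [qBinom, h1]
  have hPk := poch_ne hq hq1 k
  have hPm := poch_ne hq hq1 m
  have hPn := poch_ne hq hq1 (k + m)
  have h1Q := one_sub_ne hq hq1
  have key : Q ^ (m * (m - 1) / 2) * Q ^ (k * (k - 1) / 2) * Q ^ ((k + m) * k)
      = Q ^ ((k + m) * ((k + m) - 1) / 2) * Q ^ (k ^ 2) := by
    rw [← pow_add, ← pow_add, ← pow_add]
    congr 1
    rw [Nat.add_comm k m]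
    exact expAux m k
  field_simp
  rw [eq_div_iff (mul_ne_zero (mul_ne_zero hPn hPk) hPm), neg_pow]
  linear_combination (qPoch Q Q k * qPoch Q Q m * qPoch Q Q (k + m) * (1 - Q) ^ (k + m) *
    x ^ (k + m) * (-1) ^ k) * key
end

section
/- For 0<q<1, α>-1, and |t|<2, Hahn's identity J^{(2)}_α(t;q) = (-t²/4;q)_∞ · J^{(1)}_α(t;q) holds. -/
/-- The infinite q-shifted factorial `(a;q)_∞`. -/
noncomputable def qPochInf (a q : ℂ) : ℂ := ∏' k : ℕ, (1 - a * q ^ k)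

/-- The first Jackson q-Bessel function `J^{(1)}_α(t;q)` (for `|t| < 2`). -/
noncomputable def jacksonJ1 (α q : ℝ) (t : ℂ) : ℂ :=
  qPochInf ((q : ℂ) ^ ((α : ℂ) + 1)) (q : ℂ) / qPochInf (q : ℂ) (q : ℂ) *
    ∑' n : ℕ, (-1) ^ n * (t / 2) ^ (2 * (n : ℂ) + (α : ℂ)) /
      (qPoch (q : ℂ) (q : ℂ) n * qPoch ((q : ℂ) ^ ((α : ℂ) + 1)) (q : ℂ) n)

/-- The second Jackson q-Bessel function `J^{(2)}_α(t;q)`. -/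
noncomputable def jacksonJ2 (α q : ℝ) (t : ℂ) : ℂ :=
  qPochInf ((q : ℂ) ^ ((α : ℂ) + 1)) (q : ℂ) / qPochInf (q : ℂ) (q : ℂ) *
    ∑' n : ℕ, (-1) ^ n * (q : ℂ) ^ ((n : ℂ) * ((α : ℂ) + (n : ℂ))) *
        (t / 2) ^ (2 * (n : ℂ) + (α : ℂ)) /
      (qPoch (q : ℂ) (q : ℂ) n * qPoch ((q : ℂ) ^ ((α : ℂ) + 1)) (q : ℂ) n)


namespace S5
open Finset Filter Topology

open Finset

def ee : ℕ → ℕ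
  | 0 => 0
  | k+1 => ee k + k

def BB (q : ℂ) : ℕ → ℕ → ℂ
  | _, 0 => 1
  | 0, _+1 => 0
  | n+1, k+1 => BB q n (k+1) + q^(n-k) * BB q n k

def TT (q c : ℂ) (n k : ℕ) : ℂ := ∏ j ∈ Finset.range k, (1 - c * q ^ (n - k + j))

lemma qPoch_succ (a q : ℂ) (n : ℕ) :
    qPoch a q (n+1) = qPoch a q n * (1 - a * q ^ n) := Finset.prod_range_succ _ _

lemma qPoch_zero (a q : ℂ) : qPoch a q 0 = 1 := rfl

lemma BB_zero (q : ℂ) (n : ℕ) : BB q n 0 = 1 := by cases n <;> rfl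

lemma BB_succ (q : ℂ) (n k : ℕ) :
    BB q (n+1) (k+1) = BB q n (k+1) + q^(n-k) * BB q n k := rfl

lemma BB_eq_zero (q : ℂ) : ∀ n k, n < k → BB q n k = 0 := by
  intro n
  induction n with
  | zero => intro k hk; match k, hk with
    | k+1, _ => rfl
  | succ n ih =>
    intro k hk
    match k, hk with
    | k+1, hk =>
      rw [BB_succ, ih (k+1) (by omega), ih k (by omega)]
      ring

lemma BB_mul (q : ℂ) : ∀ n k, k ≤ n →
    BB q n k * (qPoch q q k * qPoch q q (n - k)) = qPoch q q n := by
  intro n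
  induction n with
  | zero => intro k hk; interval_cases k; simp [BB_zero, qPoch_zero]
  | succ n ih =>
    intro k hk
    match k with
    | 0 => simp [BB_zero, qPoch_zero]
    | j+1 =>
      rcases Nat.lt_or_ge j n with hjn | hjn
      · -- j + 1 ≤ n : write n = j + 1 + m
        obtain ⟨m, rfl⟩ : ∃ m, n = j + 1 + m := ⟨n - (j+1), by omega⟩
        have ih1 := ih (j+1) (by omega)
        have ih2 := ih j (by omega)
        rw [show j + 1 + m - (j+1) = m from by omega] at ih1
        rw [show j + 1 + m - j = m + 1 from by omega] at ih2
        rw [BB_succ, show j + 1 + m - j = m + 1 from by omega,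
          show j + 1 + m + 1 - (j+1) = m + 1 from by omega]
        have e_m := qPoch_succ q q m
        have e_j := qPoch_succ q q j
        calc (BB q (j+1+m) (j+1) + q^(m+1) * BB q (j+1+m) j) * (qPoch q q (j+1) * qPoch q q (m+1))
            = (BB q (j+1+m) (j+1) * (qPoch q q (j+1) * qPoch q q m)) * (1 - q*q^m)
              + q^(m+1) * (1 - q*q^j) * (BB q (j+1+m) j * (qPoch q q j * qPoch q q (m+1))) := by
              rw [e_m, e_j]; ring
          _ = qPoch q q (j+1+m) * ((1 - q*q^m) + q^(m+1) * (1 - q*q^j)) := by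
              rw [ih1, ih2]; ring
          _ = qPoch q q (j+1+m) * (1 - q * q^(j+1+m)) := by ring
          _ = qPoch q q (j+1+m+1) := (qPoch_succ _ _ _).symm
      · -- j = n
        have hjn' : j = n := by omega
        subst hjn'
        have ihjj := ih j le_rfl
        rw [Nat.sub_self, qPoch_zero, mul_one] at ihjj
        rw [BB_succ, BB_eq_zero q j (j+1) (by omega), Nat.sub_self,
          show j + 1 - (j+1) = 0 from by omega, qPoch_zero, pow_zero]
        calc (0 + 1 * BB q j j) * (qPoch q q (j+1) * 1)
            = (BB q j j * qPoch q q j) * (1 - q * q^j) := by rw [qPoch_succ]; ring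
          _ = qPoch q q (j+1) := by rw [ihjj, ← qPoch_succ]




open Finset

lemma TT_zero (q c : ℂ) (n : ℕ) : TT q c n 0 = 1 := rfl

lemma TT_mul (q c : ℂ) (n k : ℕ) (h : k ≤ n) :
    TT q c n k * qPoch c q (n - k) = qPoch c q n := by
  have h2 := Finset.prod_range_add (fun j => (1 - c * q ^ j)) (n - k) k
  have h3 : n - k + k = n := by omega
  rw [h3] at h2
  rw [mul_comm, qPoch, qPoch, h2]
  rfl

lemma TT_shift (q c : ℂ) (n k : ℕ) (h : k ≤ n) : TT q c (n+1) k = TT q (c*q) n k := by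
  refine Finset.prod_congr rfl fun j hj => ?_
  rw [show n + 1 - k + j = (n - k + j) + 1 from by omega, pow_succ]
  ring

lemma TT_succ (q c : ℂ) (n k : ℕ) (h : k ≤ n) :
    TT q c (n+1) (k+1) = TT q c n k * (1 - c * q ^ n) := by
  simp only [TT, show n + 1 - (k+1) = n - k from by omega]
  rw [Finset.prod_range_succ, show n - k + k = n from by omega]

lemma SS (q : ℂ) : ∀ n, ∀ c : ℂ,
    (∑ k ∈ Finset.range (n+1), (-1)^k * q^(ee k) * BB q n k * TT q c n k)
      = c^n * q^(2 * ee n) := by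
  intro n
  induction n with
  | zero => intro c; simp [ee, BB_zero, TT_zero]
  | succ n ih =>
    intro c
    rw [Finset.sum_range_succ']
    have hsplit : ∀ j ∈ Finset.range (n+1),
        (-1)^(j+1) * q^(ee (j+1)) * BB q (n+1) (j+1) * TT q c (n+1) (j+1)
        = ((-1)^(j+1) * q^(ee (j+1)) * BB q n (j+1) * TT q c (n+1) (j+1))
          + (-((1 - c*q^n) * q^n * ((-1)^j * q^(ee j) * BB q n j * TT q c n j))) := by
      intro j hj
      have hjn : j ≤ n := by simpa using Nat.lt_succ_iff.mp (Finset.mem_range.mp hj)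
      rw [BB_succ, TT_succ q c n j hjn]
      have hee : ee (j+1) = ee j + j := rfl
      have hpow : q^(ee (j+1)) * q^(n-j) = q^(ee j) * q^n := by
        rw [hee, pow_add, mul_assoc, ← pow_add, show j + (n - j) = n from by omega]
      calc ((-1):ℂ)^(j+1) * q^(ee (j+1)) * (BB q n (j+1) + q^(n-j) * BB q n j)
            * (TT q c n j * (1 - c * q^n))
          = (-1)^(j+1) * q^(ee (j+1)) * BB q n (j+1) * (TT q c n j * (1 - c * q^n))
            + (-1)^(j+1) * (q^(ee (j+1)) * q^(n-j)) * BB q n j * (TT q c n j * (1 - c*q^n)) := by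
            ring
        _ = _ := by rw [hpow, pow_succ]; ring
    rw [Finset.sum_congr rfl hsplit, Finset.sum_add_distrib]
    have hg : (∑ j ∈ Finset.range (n+1),
          (-1)^(j+1) * q^(ee (j+1)) * BB q n (j+1) * TT q c (n+1) (j+1))
        + (-1)^0 * q^(ee 0) * BB q (n+1) 0 * TT q c (n+1) 0
        = (c*q)^n * q^(2 * ee n) := by
      have h0 : ((-1):ℂ)^0 * q^(ee 0) * BB q (n+1) 0 * TT q c (n+1) 0
          = (-1)^0 * q^(ee 0) * BB q n 0 * TT q c (n+1) 0 := by
        rw [BB_zero, BB_zero]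
      rw [h0, ← Finset.sum_range_succ'
        (fun k => (-1)^k * q^(ee k) * BB q n k * TT q c (n+1) k) (n+1)]
      rw [Finset.sum_range_succ, BB_eq_zero q n (n+1) (by omega)]
      have hsh : ∀ k ∈ Finset.range (n+1),
          (-1)^k * q^(ee k) * BB q n k * TT q c (n+1) k
          = (-1)^k * q^(ee k) * BB q n k * TT q (c*q) n k := by
        intro k hk
        rw [TT_shift q c n k (Nat.lt_succ_iff.mp (Finset.mem_range.mp hk))]
      rw [Finset.sum_congr rfl hsh, ih (c*q)]
      ring
    have hh : (∑ j ∈ Finset.range (n+1),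
          -((1 - c*q^n) * q^n * ((-1)^j * q^(ee j) * BB q n j * TT q c n j)))
        = -((1 - c*q^n) * q^n * (c^n * q^(2 * ee n))) := by
      simp only [← neg_mul]
      rw [← Finset.mul_sum, ih c, neg_mul]
    rw [show ee (n+1) = ee n + n from rfl]
    linear_combination hg + hh


open Filter Topology

lemma one_sub_ne_zero {z : ℂ} (h : ‖z‖ < 1) : 1 - z ≠ 0 := by
  intro h0
  have : z = 1 := by linear_combination -h0
  simp [this] at h

lemma qPoch_ne_zero {a w : ℂ} (ha : ‖a‖ < 1) (hw : ‖w‖ ≤ 1) (n : ℕ) : qPoch a w n ≠ 0 := by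
  rw [qPoch, Finset.prod_ne_zero_iff]
  intro j _
  apply one_sub_ne_zero
  rw [norm_mul, norm_pow]
  calc ‖a‖ * ‖w‖^j ≤ ‖a‖ * 1 := by
        apply mul_le_mul_of_nonneg_left _ (norm_nonneg a)
        exact pow_le_one₀ (norm_nonneg w) hw
    _ < 1 := by rwa [mul_one]

/-- Ratio test, convenient form. -/
lemma summable_of_ratio {f g : ℕ → ℂ} {L : ℂ} (hL : ‖L‖ < 1)
    (hfg : ∀ n, f (n+1) = f n * g n) (hg : Tendsto g atTop (𝓝 L)) : Summable f := by
  set r : ℝ := (1 + ‖L‖) / 2 with hr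
  have hr1 : r < 1 := by rw [hr]; linarith
  have hLr : ‖L‖ < r := by rw [hr]; linarith
  apply summable_of_ratio_norm_eventually_le hr1
  have hev : ∀ᶠ n in atTop, ‖g n‖ ≤ r := hg.norm.eventually_le_const hLr
  filter_upwards [hev] with n hn
  rw [hfg n, norm_mul, mul_comm]
  exact mul_le_mul_of_nonneg_right hn (norm_nonneg _)





noncomputable def AA (q : ℝ) (y : ℂ) (k : ℕ) : ℂ :=
  (q:ℂ)^(ee k) * y^k / qPoch (q:ℂ) (q:ℂ) k

section
variable {q : ℝ} (hq : 0 < q) (hq1 : q < 1)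

include hq hq1

lemma normQ : ‖(q:ℂ)‖ = q := by
  rw [Complex.norm_real]; exact Real.norm_of_nonneg hq.le

lemma normQ1 : ‖(q:ℂ)‖ < 1 := by rw [normQ hq hq1]; exact hq1

lemma normQle : ‖(q:ℂ)‖ ≤ 1 := (normQ1 hq hq1).le

lemma qq_ne (k : ℕ) : qPoch (q:ℂ) (q:ℂ) k ≠ 0 :=
  qPoch_ne_zero (normQ1 hq hq1) (normQle hq hq1) k

lemma one_sub_pow_ne (k : ℕ) : (1:ℂ) - (q:ℂ) * (q:ℂ)^k ≠ 0 := by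
  apply one_sub_ne_zero
  rw [norm_mul, norm_pow, normQ hq hq1]
  calc q * q ^ k ≤ q * 1 := by
        apply mul_le_mul_of_nonneg_left _ hq.le
        exact pow_le_one₀ hq.le hq1.le
    _ < 1 := by rw [mul_one]; exact hq1

omit hq hq1 in
lemma AA_zero (y : ℂ) : AA q y 0 = 1 := by
  simp [AA, ee, qPoch_zero]

lemma AA_succ (y : ℂ) (k : ℕ) :
    AA q y (k+1) = AA q y k * ((q:ℂ)^k * y / (1 - (q:ℂ) * (q:ℂ)^k)) := by
  rw [AA, AA, qPoch_succ, show ee (k+1) = ee k + k from rfl, pow_add, pow_succ]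
  have d1 := qq_ne hq hq1 k
  have d2 := one_sub_pow_ne hq hq1 k
  field_simp

lemma tendsto_qpow : Tendsto (fun k : ℕ => ((q:ℂ))^k) atTop (𝓝 0) :=
  tendsto_pow_atTop_nhds_zero_of_norm_lt_one (normQ1 hq hq1)

lemma summable_AA (y : ℂ) : Summable (AA q y) := by
  apply summable_of_ratio (L := 0) (g := fun k => (q:ℂ)^k * y / (1 - (q:ℂ) * (q:ℂ)^k))
    (by norm_num) (AA_succ hq hq1 y)
  have h1 : Tendsto (fun k : ℕ => (q:ℂ)^k * y) atTop (𝓝 (0 * y)) :=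
    (tendsto_qpow hq hq1).mul_const y
  have h2 : Tendsto (fun k : ℕ => 1 - (q:ℂ) * (q:ℂ)^k) atTop (𝓝 (1 - (q:ℂ) * 0)) :=
    tendsto_const_nhds.sub (tendsto_const_nhds.mul (tendsto_qpow hq hq1))
  have := h1.div h2 (by norm_num)
  simpa [Pi.div_def] using this

lemma funceq (y : ℂ) : (∑' k, AA q y k) = (1 + y) * ∑' k, AA q ((q:ℂ)*y) k := by
  have hrec : ∀ k, AA q y (k+1) = AA q ((q:ℂ)*y) (k+1) + AA q ((q:ℂ)*y) k * y := by
    intro k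
    rw [AA, AA, AA, qPoch_succ, show ee (k+1) = ee k + k from rfl, pow_add]
    have d1 := qq_ne hq hq1 k
    have d2 := one_sub_pow_ne hq hq1 k
    rw [div_mul_eq_mul_div, div_add_div _ _ (mul_ne_zero d1 d2) d1, div_eq_div_iff (mul_ne_zero d1 d2) (mul_ne_zero (mul_ne_zero d1 d2) d1)]
    ring
  have s0 := summable_AA hq hq1 ((q:ℂ)*y)
  have s1 : Summable (fun k => AA q ((q:ℂ)*y) (k+1)) := (summable_nat_add_iff 1).2 s0
  have s2 : Summable (fun k => AA q ((q:ℂ)*y) k * y) := s0.mul_right y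
  have h := Summable.tsum_eq_zero_add (summable_AA hq hq1 y)
  rw [AA_zero] at h
  have h2 := Summable.tsum_eq_zero_add s0
  rw [AA_zero] at h2
  calc ∑' k, AA q y k = 1 + ∑' k, AA q y (k+1) := h
    _ = 1 + ∑' k, (AA q ((q:ℂ)*y) (k+1) + AA q ((q:ℂ)*y) k * y) := by
        congr 1; exact tsum_congr hrec
    _ = 1 + ((∑' k, AA q ((q:ℂ)*y) (k+1)) + (∑' k, AA q ((q:ℂ)*y) k) * y) := by
        rw [Summable.tsum_add s1 s2, tsum_mul_right]
    _ = (1 + y) * ∑' k, AA q ((q:ℂ)*y) k := by linear_combination (-1 : ℂ) * h2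

lemma iter (y : ℂ) : ∀ n : ℕ,
    (∑' k, AA q y k)
      = (∏ j ∈ Finset.range n, (1 + (q:ℂ)^j * y)) * ∑' k, AA q ((q:ℂ)^n * y) k := by
  intro n
  induction n with
  | zero => simp
  | succ n ih =>
    rw [ih, funceq hq hq1 ((q:ℂ)^n * y), Finset.prod_range_succ,
      show (q:ℂ) * ((q:ℂ)^n * y) = (q:ℂ)^(n+1) * y from by ring]
    ring

end



open Filter Topology
section
variable {q : ℝ} (hq : 0 < q) (hq1 : q < 1)

lemma AA_norm (y : ℂ) (k : ℕ) : ‖AA q y k‖ = ‖AA q 1 k‖ * ‖y‖^k := by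
  simp only [AA, norm_div, norm_mul, norm_pow, norm_one, one_pow]
  ring

include hq hq1

lemma csum_nonneg : 0 ≤ ∑' k, ‖AA q 1 (k+1)‖ := tsum_nonneg (fun _ => norm_nonneg _)

lemma bound (z : ℂ) (hz : ‖z‖ ≤ 1) :
    ‖(∑' k, AA q z k) - 1‖ ≤ (∑' k, ‖AA q 1 (k+1)‖) * ‖z‖ := by
  have h := Summable.tsum_eq_zero_add (summable_AA hq hq1 z)
  rw [AA_zero] at h
  have hsz : Summable (fun k => AA q z (k+1)) := (summable_nat_add_iff 1).2 (summable_AA hq hq1 z)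
  have hsz' : Summable (fun k => ‖AA q z (k+1)‖) := summable_norm_iff.2 hsz
  have hs1' : Summable (fun k => ‖AA q 1 (k+1)‖ * ‖z‖) :=
    (summable_norm_iff.2 ((summable_nat_add_iff 1).2 (summable_AA hq hq1 1))).mul_right _
  calc ‖(∑' k, AA q z k) - 1‖ = ‖∑' k, AA q z (k+1)‖ := congrArg norm (by rw [h]; ring)
    _ ≤ ∑' k, ‖AA q z (k+1)‖ := norm_tsum_le_tsum_norm hsz'
    _ ≤ ∑' k, ‖AA q 1 (k+1)‖ * ‖z‖ := by
        apply Summable.tsum_le_tsum _ hsz' hs1'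
        intro k
        rw [AA_norm]
        apply mul_le_mul_of_nonneg_left _ (norm_nonneg _)
        calc ‖z‖^(k+1) ≤ ‖z‖^1 := pow_le_pow_of_le_one (norm_nonneg z) hz (by omega)
          _ = ‖z‖ := pow_one _
    _ = (∑' k, ‖AA q 1 (k+1)‖) * ‖z‖ := tsum_mul_right

lemma tendsto_small (y : ℂ) (hy : ‖y‖ ≤ 1) :
    Tendsto (fun n => ∑' k, AA q ((q:ℂ)^n * y) k) atTop (𝓝 1) := by
  rw [← tendsto_sub_nhds_zero_iff]
  have hb : ∀ n : ℕ, ‖(∑' k, AA q ((q:ℂ)^n * y) k) - 1‖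
      ≤ ((∑' k, ‖AA q 1 (k+1)‖) * ‖y‖) * q^n := by
    intro n
    have hn : ‖(q:ℂ)^n * y‖ ≤ 1 := by
      rw [norm_mul, norm_pow, normQ hq hq1]
      exact mul_le_one₀ (pow_le_one₀ hq.le hq1.le) (norm_nonneg y) hy
    calc ‖(∑' k, AA q ((q:ℂ)^n * y) k) - 1‖
        ≤ (∑' k, ‖AA q 1 (k+1)‖) * ‖(q:ℂ)^n * y‖ := bound hq hq1 _ hn
      _ = ((∑' k, ‖AA q 1 (k+1)‖) * ‖y‖) * q^n := by
          rw [norm_mul, norm_pow, normQ hq hq1]; ring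
  have htd : Tendsto (fun n : ℕ => ((∑' k, ‖AA q 1 (k+1)‖) * ‖y‖) * q^n) atTop (𝓝 0) := by
    simpa using (tendsto_pow_atTop_nhds_zero_of_lt_one hq.le hq1).const_mul
      ((∑' k, ‖AA q 1 (k+1)‖) * ‖y‖)
  exact squeeze_zero_norm hb htd

lemma multipliable_euler (y : ℂ) (hy : ‖y‖ < 1) :
    Multipliable (fun k : ℕ => 1 - (-y) * (q:ℂ)^k) := by
  have hfn : ∀ (x : Unit) (n : ℕ), (fun k (_ : Unit) => 1 - (-y) * (q:ℂ)^k) n x ≠ 0 := by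
    intro _ n
    apply one_sub_ne_zero
    rw [norm_mul, norm_neg, norm_pow, normQ hq hq1]
    calc ‖y‖ * q^n ≤ ‖y‖ * 1 := by
          apply mul_le_mul_of_nonneg_left (pow_le_one₀ hq.le hq1.le) (norm_nonneg y)
      _ < 1 := by rw [mul_one]; exact hy
  have hf : ∀ (x : Unit), Summable fun n => Complex.log ((fun k (_ : Unit) => 1 - (-y) * (q:ℂ)^k) n x) := by
    intro _
    apply Summable.of_norm_bounded_eventually_nat (g := fun n => (3/2 * ‖y‖) * q^n)
    · exact (summable_geometric_of_lt_one hq.le hq1).mul_left _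
    · have htd : Tendsto (fun n : ℕ => ‖y‖ * q^n) atTop (𝓝 0) := by
        simpa using (tendsto_pow_atTop_nhds_zero_of_lt_one hq.le hq1).const_mul ‖y‖
      filter_upwards [htd.eventually_le_const (by norm_num : (0:ℝ) < 1/2)] with n hn
      have hnrm : ‖y * (q:ℂ)^n‖ ≤ 1/2 := by
        rw [norm_mul, norm_pow, normQ hq hq1]; exact hn
      calc ‖Complex.log (1 - -y * (q:ℂ)^n)‖
          = ‖Complex.log (1 + y * (q:ℂ)^n)‖ := by ring_nf
        _ ≤ 3/2 * ‖y * (q:ℂ)^n‖ := Complex.norm_log_one_add_half_le_self hnrm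
        _ = (3/2 * ‖y‖) * q^n := by rw [norm_mul, norm_pow, normQ hq hq1]; ring
  exact Complex.multipliable_of_summable_log (hf ())

lemma euler (y : ℂ) (hy : ‖y‖ < 1) :
    qPochInf (-y) (q:ℂ) = ∑' k, AA q y k := by
  have hm := multipliable_euler hq hq1 y hy
  have h1 : Tendsto (fun n => ∏ i ∈ Finset.range n, (1 - (-y) * (q:ℂ)^i)) atTop
      (𝓝 (qPochInf (-y) (q:ℂ))) := hm.hasProd.tendsto_prod_nat
  have hcg : ∀ n, (∏ i ∈ Finset.range n, (1 - (-y) * (q:ℂ)^i))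
      = ∏ j ∈ Finset.range n, (1 + (q:ℂ)^j * y) := by
    intro n; exact Finset.prod_congr rfl (fun j _ => by ring)
  have h1' : Tendsto (fun n => ∏ j ∈ Finset.range n, (1 + (q:ℂ)^j * y)) atTop
      (𝓝 (qPochInf (-y) (q:ℂ))) := by
    simpa only [hcg] using h1
  have h2 : Tendsto (fun n => (∏ j ∈ Finset.range n, (1 + (q:ℂ)^j * y))
      * ∑' k, AA q ((q:ℂ)^n * y) k) atTop (𝓝 (qPochInf (-y) (q:ℂ) * 1)) :=
    h1'.mul (tendsto_small hq hq1 y hy.le)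
  have h3 : Tendsto (fun _ : ℕ => ∑' k, AA q y k) atTop (𝓝 (∑' k, AA q y k)) :=
    tendsto_const_nhds
  have h4 : (fun n : ℕ => (∏ j ∈ Finset.range n, (1 + (q:ℂ)^j * y))
      * ∑' k, AA q ((q:ℂ)^n * y) k) = fun _ : ℕ => ∑' k, AA q y k := by
    funext n; exact (iter hq hq1 y n).symm
  rw [h4] at h2
  have := tendsto_nhds_unique h3 h2
  rw [this, mul_one]

end



section Main
variable {q α : ℝ} {t : ℂ} (hq : 0 < q) (hq1 : q < 1) (hα : -1 < α)


lemma two_ee (n : ℕ) : 2 * ee n + n = n*n := by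
  induction n with
  | zero => rfl
  | succ n ih =>
    have h1 : ee (n+1) = ee n + n := rfl
    have h2 : (n+1)*(n+1) = n*n + 2*n + 1 := by ring
    rw [h1, h2]; omega

lemma cast_two_ee (n : ℕ) : ((2 * ee n : ℕ) : ℂ) = (n:ℂ)*(n:ℂ) - (n:ℂ) := by
  have h : ((2 * ee n + n : ℕ) : ℂ) = ((n*n : ℕ) : ℂ) := by rw [two_ee]
  push_cast at h ⊢
  linear_combination h

lemma cpow_mul_nat (z w : ℂ) (hz : z ≠ 0) (n : ℕ) : z^(w*(n:ℂ)) = (z^w)^n := by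
  induction n with
  | zero => simp
  | succ n ih =>
    have : w*((n+1 : ℕ):ℂ) = w*(n:ℂ) + w := by push_cast; ring
    rw [this, Complex.cpow_add _ _ hz, ih, pow_succ]

section Core
variable (hc' : ‖(q:ℂ) ^ ((α:ℂ) + 1)‖ < 1) {x : ℂ} (hx : ‖x‖ < 1)

/-- coefficients of `J^{(1)}` series. -/
noncomputable def bC (q α : ℝ) (x : ℂ) (n : ℕ) : ℂ :=
  (-1)^n * x^n / (qPoch (q:ℂ) (q:ℂ) n * qPoch ((q:ℂ) ^ ((α:ℂ) + 1)) (q:ℂ) n)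

/-- coefficients of `J^{(2)}` series. -/
noncomputable def pC (q α : ℝ) (x : ℂ) (n : ℕ) : ℂ :=
  (-1)^n * ((q:ℂ) ^ ((α:ℂ) + 1))^n * (q:ℂ)^(2 * ee n) * x^n /
    (qPoch (q:ℂ) (q:ℂ) n * qPoch ((q:ℂ) ^ ((α:ℂ) + 1)) (q:ℂ) n)

include hq hq1 hc'

lemma qc_ne (n : ℕ) : qPoch ((q:ℂ) ^ ((α:ℂ) + 1)) (q:ℂ) n ≠ 0 :=
  qPoch_ne_zero hc' (normQle hq hq1) n

lemma one_sub_c_pow_ne (n : ℕ) : (1:ℂ) - (q:ℂ) ^ ((α:ℂ) + 1) * (q:ℂ)^n ≠ 0 := by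
  apply one_sub_ne_zero
  rw [norm_mul, norm_pow, normQ hq hq1]
  calc ‖(q:ℂ) ^ ((α:ℂ) + 1)‖ * q^n ≤ ‖(q:ℂ) ^ ((α:ℂ) + 1)‖ * 1 := by
        apply mul_le_mul_of_nonneg_left (pow_le_one₀ hq.le hq1.le) (norm_nonneg _)
    _ < 1 := by rw [mul_one]; exact hc'

include hx

lemma summable_bC : Summable (bC q α x) := by
  set c : ℂ := (q:ℂ) ^ ((α:ℂ) + 1) with hcdef
  apply summable_of_ratio (L := -x)
    (g := fun n => -x / ((1 - (q:ℂ) * (q:ℂ)^n) * (1 - c * (q:ℂ)^n)))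
    (by rwa [norm_neg])
  · intro n
    have d1 := qq_ne hq hq1 n
    have d2 := qc_ne hq hq1 hc' n
    have d3 := one_sub_pow_ne hq hq1 n
    have d4 := one_sub_c_pow_ne hq hq1 hc' n
    rw [bC, bC, qPoch_succ, qPoch_succ, pow_succ, pow_succ]
    field_simp
    ring
  · have hp := tendsto_qpow hq hq1
    have hden : Tendsto (fun n : ℕ => (1 - (q:ℂ) * (q:ℂ)^n) * (1 - c * (q:ℂ)^n)) atTop
        (𝓝 ((1 - (q:ℂ) * 0) * (1 - c * 0))) :=
      (tendsto_const_nhds.sub (tendsto_const_nhds.mul hp)).mul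
        (tendsto_const_nhds.sub (tendsto_const_nhds.mul hp))
    have hnum : Tendsto (fun _ : ℕ => -x) atTop (𝓝 (-x)) := tendsto_const_nhds
    have := hnum.div hden (by norm_num)
    simpa [Pi.div_def] using this

lemma summable_pC : Summable (pC q α x) := by
  set c : ℂ := (q:ℂ) ^ ((α:ℂ) + 1) with hcdef
  apply summable_of_ratio (L := 0)
    (g := fun n => -(c * x * ((q:ℂ)^n)^2) / ((1 - (q:ℂ) * (q:ℂ)^n) * (1 - c * (q:ℂ)^n)))
    (by norm_num)
  · intro n
    have d1 := qq_ne hq hq1 n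
    have d2 := qc_ne hq hq1 hc' n
    have d3 := one_sub_pow_ne hq hq1 n
    have d4 := one_sub_c_pow_ne hq hq1 hc' n
    rw [pC, pC, qPoch_succ, qPoch_succ, pow_succ, pow_succ, pow_succ,
      show 2 * ee (n+1) = 2 * ee n + (n + n) from by rw [show ee (n+1) = ee n + n from rfl]; ring,
      pow_add, pow_add]
    rw [hcdef]
    field_simp
  · have hp := tendsto_qpow hq hq1
    have hden : Tendsto (fun n : ℕ => (1 - (q:ℂ) * (q:ℂ)^n) * (1 - c * (q:ℂ)^n)) atTop
        (𝓝 ((1 - (q:ℂ) * 0) * (1 - c * 0))) :=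
      (tendsto_const_nhds.sub (tendsto_const_nhds.mul hp)).mul
        (tendsto_const_nhds.sub (tendsto_const_nhds.mul hp))
    have hnum : Tendsto (fun n : ℕ => -(c * x * ((q:ℂ)^n)^2)) atTop (𝓝 (-(c * x * 0^2))) := by
      apply Tendsto.neg
      exact tendsto_const_nhds.mul (hp.pow 2)
    have := hnum.div hden (by norm_num)
    simpa [Pi.div_def] using this

omit hq hq1 hα hc' hx in
lemma coeff_term {x c : ℂ} (m k : ℕ)
    (d1 : qPoch (q:ℂ) (q:ℂ) k ≠ 0) (d2 : qPoch (q:ℂ) (q:ℂ) m ≠ 0)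
    (d3 : qPoch (q:ℂ) (q:ℂ) (m+k) ≠ 0) (d4 : qPoch c (q:ℂ) m ≠ 0)
    (d5 : qPoch c (q:ℂ) (m+k) ≠ 0)
    (e1 : BB (q:ℂ) (m+k) k * (qPoch (q:ℂ) (q:ℂ) k * qPoch (q:ℂ) (q:ℂ) m) = qPoch (q:ℂ) (q:ℂ) (m+k))
    (e2 : TT (q:ℂ) c (m+k) k * qPoch c (q:ℂ) m = qPoch c (q:ℂ) (m+k)) :
    ((q:ℂ)^(ee k) * x^k / qPoch (q:ℂ) (q:ℂ) k)
      * ((-1)^m * x^m / (qPoch (q:ℂ) (q:ℂ) m * qPoch c (q:ℂ) m))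
    = ((-1)^(m+k) * x^(m+k) / (qPoch (q:ℂ) (q:ℂ) (m+k) * qPoch c (q:ℂ) (m+k)))
      * ((-1)^k * (q:ℂ)^(ee k) * BB (q:ℂ) (m+k) k * TT (q:ℂ) c (m+k) k) := by
  have hBB : BB (q:ℂ) (m+k) k ≠ 0 := by
    intro h0; rw [h0, zero_mul] at e1; exact d3 e1.symm
  have hTT : TT (q:ℂ) c (m+k) k ≠ 0 := by
    intro h0; rw [h0, zero_mul] at e2; exact d5 e2.symm
  have hneg : ((-1:ℂ))^k * (-1)^k = 1 := by
    rw [← pow_add, ← two_mul, pow_mul]; norm_num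
  rw [← e1, ← e2, pow_add x, pow_add (-1 : ℂ)]
  field_simp
  linear_combination (-(((q:ℂ)) ^ ee k * x ^ k * x ^ m)) * hneg

lemma cauchy_coeff (n : ℕ) :
    ∑ k ∈ Finset.range (n+1), AA q x k * bC q α x (n - k) = pC q α x n := by
  have key := SS (q:ℂ) n ((q:ℂ) ^ ((α:ℂ) + 1))
  have hterm : ∀ k ∈ Finset.range (n+1), AA q x k * bC q α x (n - k)
      = ((-1)^n * x^n / (qPoch (q:ℂ) (q:ℂ) n * qPoch ((q:ℂ) ^ ((α:ℂ) + 1)) (q:ℂ) n))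
        * ((-1)^k * (q:ℂ)^(ee k) * BB (q:ℂ) n k * TT (q:ℂ) ((q:ℂ) ^ ((α:ℂ) + 1)) n k) := by
    intro k hk
    have hkn : k ≤ n := Nat.lt_succ_iff.mp (Finset.mem_range.mp hk)
    obtain ⟨m, rfl⟩ : ∃ m, n = m + k := ⟨n - k, by omega⟩
    rw [show m + k - k = m from by omega]
    have e1 := BB_mul (q:ℂ) (m+k) k (by omega)
    have e2 := TT_mul (q:ℂ) ((q:ℂ) ^ ((α:ℂ) + 1)) (m+k) k (by omega)
    rw [show m + k - k = m from by omega] at e1 e2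
    rw [AA, bC]
    exact coeff_term m k (qq_ne hq hq1 k) (qq_ne hq hq1 m) (qq_ne hq hq1 (m+k))
      (qc_ne hq hq1 hc' m) (qc_ne hq hq1 hc' (m+k)) e1 e2
  rw [Finset.sum_congr rfl hterm, ← Finset.mul_sum, key, pC]
  ring

lemma cauchy : (∑' k, AA q x k) * (∑' n, bC q α x n) = ∑' n, pC q α x n := by
  have h1 : Summable (fun k => ‖AA q x k‖) := summable_norm_iff.2 (summable_AA hq hq1 x)
  have h2 : Summable (fun n => ‖bC q α x n‖) :=
    summable_norm_iff.2 (summable_bC hq hq1 hc' hx)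
  rw [tsum_mul_tsum_eq_tsum_sum_antidiagonal_of_summable_norm h1 h2]
  apply tsum_congr
  intro n
  rw [Finset.Nat.sum_antidiagonal_eq_sum_range_succ_mk]
  exact cauchy_coeff hq hq1 hc' hx n

end Core

end Main
end S5

/-- Hahn's identity: `J^{(2)}_α(t;q) = (-t²/4;q)_∞ J^{(1)}_α(t;q)` for `|t| < 2`. -/
theorem stmt5 (q α : ℝ) (hq : 0 < q) (hq1 : q < 1) (hα : -1 < α)
    (t : ℂ) (ht : ‖t‖ < 2) :
    jacksonJ2 α q t = qPochInf (-t ^ 2 / 4) (q : ℂ) * jacksonJ1 α q t := by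
  have hQ0 : (q:ℂ) ≠ 0 := by exact_mod_cast hq.ne'
  have hc' : ‖(q:ℂ) ^ ((α:ℂ) + 1)‖ < 1 := by
    rw [Complex.norm_cpow_eq_rpow_re_of_pos hq]
    simp only [Complex.add_re, Complex.ofReal_re, Complex.one_re]
    exact Real.rpow_lt_one hq.le hq1 (by linarith)
  by_cases ht0 : t = 0
  · -- degenerate case t = 0
    subst ht0
    have hE : qPochInf (-(0:ℂ)^2/4) (q:ℂ) = 1 := by
      have h0 : (-(0:ℂ)^2/4) = 0 := by norm_num
      rw [h0, qPochInf]
      simp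
    rw [jacksonJ1, jacksonJ2, hE]
    by_cases hα0 : α = 0
    · subst hα0
      have hJ2 : (∑' n : ℕ, (-1)^n * (q:ℂ) ^ ((n:ℂ) * (((0:ℝ):ℂ) + (n:ℂ))) *
          ((0:ℂ)/2) ^ (2*(n:ℂ) + ((0:ℝ):ℂ)) /
          (qPoch (q:ℂ) (q:ℂ) n * qPoch ((q:ℂ) ^ (((0:ℝ):ℂ) + 1)) (q:ℂ) n)) = 1 := by
        rw [tsum_eq_single 0 ?_]
        · norm_num [S5.qPoch_zero]
        · intro n hn
          have hne : (2*(n:ℂ) + ((0:ℝ):ℂ)) ≠ 0 := by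
            intro h
            have hre := congrArg Complex.re h
            simp at hre
            exact hn (by exact_mod_cast hre)
          rw [show ((0:ℂ)/2) = 0 from by norm_num, Complex.zero_cpow hne]
          ring
      have hJ1 : (∑' n : ℕ, (-1)^n * ((0:ℂ)/2) ^ (2*(n:ℂ) + ((0:ℝ):ℂ)) /
          (qPoch (q:ℂ) (q:ℂ) n * qPoch ((q:ℂ) ^ (((0:ℝ):ℂ) + 1)) (q:ℂ) n)) = 1 := by
        rw [tsum_eq_single 0 ?_]
        · norm_num [S5.qPoch_zero]
        · intro n hn
          have hne : (2*(n:ℂ) + ((0:ℝ):ℂ)) ≠ 0 := by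
            intro h
            have hre := congrArg Complex.re h
            simp at hre
            exact hn (by exact_mod_cast hre)
          rw [show ((0:ℂ)/2) = 0 from by norm_num, Complex.zero_cpow hne]
          ring
      rw [hJ1, hJ2, one_mul]
    · have hzero : ∀ n : ℕ, ((0:ℂ)/2) ^ (2*(n:ℂ) + (α:ℂ)) = 0 := by
        intro n
        rw [show ((0:ℂ)/2) = 0 from by norm_num]
        apply Complex.zero_cpow
        intro h
        have hre := congrArg Complex.re h
        simp at hre
        rcases Nat.eq_zero_or_pos n with hn | hn
        · exact hα0 (by simpa [hn] using hre)
        · have h1 : (1:ℝ) ≤ (n:ℝ) := by exact_mod_cast hn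
          linarith
      have hJ2 : (∑' n : ℕ, (-1)^n * (q:ℂ) ^ ((n:ℂ) * ((α:ℂ) + (n:ℂ))) *
          ((0:ℂ)/2) ^ (2*(n:ℂ) + (α:ℂ)) /
          (qPoch (q:ℂ) (q:ℂ) n * qPoch ((q:ℂ) ^ ((α:ℂ) + 1)) (q:ℂ) n)) = 0 := by
        rw [show (fun n : ℕ => (-1)^n * (q:ℂ) ^ ((n:ℂ) * ((α:ℂ) + (n:ℂ))) *
            ((0:ℂ)/2) ^ (2*(n:ℂ) + (α:ℂ)) /
            (qPoch (q:ℂ) (q:ℂ) n * qPoch ((q:ℂ) ^ ((α:ℂ) + 1)) (q:ℂ) n))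
            = (fun _ : ℕ => (0:ℂ)) from funext fun n => by rw [hzero n]; ring]
        exact tsum_zero
      have hJ1 : (∑' n : ℕ, (-1)^n * ((0:ℂ)/2) ^ (2*(n:ℂ) + (α:ℂ)) /
          (qPoch (q:ℂ) (q:ℂ) n * qPoch ((q:ℂ) ^ ((α:ℂ) + 1)) (q:ℂ) n)) = 0 := by
        rw [show (fun n : ℕ => (-1)^n * ((0:ℂ)/2) ^ (2*(n:ℂ) + (α:ℂ)) /
            (qPoch (q:ℂ) (q:ℂ) n * qPoch ((q:ℂ) ^ ((α:ℂ) + 1)) (q:ℂ) n))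
            = (fun _ : ℕ => (0:ℂ)) from funext fun n => by rw [hzero n]; ring]
        exact tsum_zero
      rw [hJ1, hJ2]
      ring
  · -- main case t ≠ 0
    have ht2 : t/2 ≠ 0 := div_ne_zero ht0 two_ne_zero
    set x : ℂ := (t/2)^2 with hxdef
    have hx : ‖x‖ < 1 := by
      rw [hxdef, norm_pow, norm_div]
      have h2 : ‖(2:ℂ)‖ = 2 := by norm_num
      rw [h2]
      nlinarith [norm_nonneg t]
    have hsplit : ∀ n : ℕ, (t/2) ^ (2*(n:ℂ) + (α:ℂ)) = x^n * (t/2)^(α:ℂ) := by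
      intro n
      rw [Complex.cpow_add _ _ ht2]
      congr 1
      rw [show (2*(n:ℂ)) = ((2*n : ℕ) : ℂ) from by push_cast; ring,
        Complex.cpow_natCast, pow_mul]
    have hqexp : ∀ n : ℕ, (q:ℂ) ^ ((n:ℂ) * ((α:ℂ) + (n:ℂ)))
        = ((q:ℂ) ^ ((α:ℂ)+1))^n * (q:ℂ)^(2 * S5.ee n) := by
      intro n
      have h1 : (n:ℂ) * ((α:ℂ) + (n:ℂ)) = ((α:ℂ)+1)*(n:ℂ) + ((2 * S5.ee n : ℕ):ℂ) := by
        rw [S5.cast_two_ee]; ring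
      rw [h1, Complex.cpow_add _ _ hQ0, S5.cpow_mul_nat _ _ hQ0, Complex.cpow_natCast]
    have hJ2 : (∑' n : ℕ, (-1)^n * (q:ℂ) ^ ((n:ℂ) * ((α:ℂ) + (n:ℂ))) *
        (t/2) ^ (2*(n:ℂ) + (α:ℂ)) /
        (qPoch (q:ℂ) (q:ℂ) n * qPoch ((q:ℂ) ^ ((α:ℂ) + 1)) (q:ℂ) n))
        = (∑' n, S5.pC q α x n) * (t/2)^(α:ℂ) := by
      rw [← tsum_mul_right]
      apply tsum_congr
      intro n
      rw [hqexp n, hsplit n, S5.pC]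
      ring
    have hJ1 : (∑' n : ℕ, (-1)^n * (t/2) ^ (2*(n:ℂ) + (α:ℂ)) /
        (qPoch (q:ℂ) (q:ℂ) n * qPoch ((q:ℂ) ^ ((α:ℂ) + 1)) (q:ℂ) n))
        = (∑' n, S5.bC q α x n) * (t/2)^(α:ℂ) := by
      rw [← tsum_mul_right]
      apply tsum_congr
      intro n
      rw [hsplit n, S5.bC]
      ring
    have heuler : qPochInf (-t^2/4) (q:ℂ) = ∑' k, S5.AA q x k := by
      rw [show (-t^2/4 : ℂ) = -x from by rw [hxdef]; ring]
      exact S5.euler hq hq1 x hx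
    rw [jacksonJ2, jacksonJ1, hJ2, hJ1, heuler, ← S5.cauchy hq hq1 hc' hx]
    ring
end
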